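/- Let F be a field, let G(λ) ∈ F(λ)^{p×m} be a rational matrix, and let 𝓛_1(λ) = [[A_1λ+A_0, B_1λ+B_0], [−(C_1λ+C_0), D_1λ+D_0]] ∈ F[λ]^{(n+(p+s))×(n+(m+s))} be a strong linearization of G(λ). Let Q_1, Q_3 ∈ F^{n×n}, Q_2 ∈ F^{(p+s)×(p+s)}, Q_4 ∈ F^{(m+s)×(m+s)} be nonsingular matrices, W ∈ F^{(p+s)×n} and Z ∈ F^{n×(m+s)}. Then the pencil 𝓛_2(λ) := [[Q_1, 0],[W, Q_2]] · 𝓛_1(λ) · [[Q_3, Z],[0, Q_4]] is a strong linearization of G(λ). -/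

import Mathlib

open Matrix

/-- A square polynomial matrix is unimodular if its determinant is a nonzero constant. -/
def Unimodular {F : Type*} [Field F] {ι : Type*} [Fintype ι] [DecidableEq ι]
    (U : Matrix ι ι (Polynomial F)) : Prop :=
  ∃ c : F, c ≠ 0 ∧ U.det = Polynomial.C c

/-- A rational function is proper if the degree of its numerator is at most the degree of
its denominator. -/
def ProperRF {F : Type*} [Field F] (r : RatFunc F) : Prop := r.intDegree ≤ 0

/-- A rational function is biproper if its numerator and denominator have the same degree. -/
def BiproperRF {F : Type*} [Field F] (r : RatFunc F) : Prop := r ≠ 0 ∧ r.intDegree = 0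

/-- A square rational matrix is biproper if all its entries are proper and its determinant
is biproper. -/
def BiproperMatrix {F : Type*} [Field F] {ι : Type*} [Fintype ι] [DecidableEq ι]
    (M : Matrix ι ι (RatFunc F)) : Prop :=
  (∀ i j, ProperRF (M i j)) ∧ BiproperRF M.det

/-- The polynomial part of a rational function: the quotient in the division of its
numerator by its (monic) denominator. -/
noncomputable def polyPart {F : Type*} [Field F] (r : RatFunc F) : Polynomial F :=
  r.num /ₘ r.denom

open Classical in
/-- `g(R) = min(0, q₁(R))`: minus the degree of the polynomial part of the rational matrix
`R` if that polynomial part is nonzero, and `0` otherwise. -/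
noncomputable def gOrder {F : Type*} [Field F] {ι κ : Type*} [Fintype ι] [Fintype κ]
    (R : Matrix ι κ (RatFunc F)) : ℤ :=
  if ∀ i j, polyPart (R i j) = 0 then 0
  else -((Finset.univ.sup fun ij : ι × κ => (polyPart (R ij.1 ij.2)).natDegree : ℕ) : ℤ)

/-- `n` is the least order `ν(G)` of the rational matrix `G`: the minimum of
`deg(det A(λ))` over all polynomial system matrices `[[A, B], [-C, D]]` with
`G = D + C A⁻¹ B` and `det A ≠ 0`. -/
def IsLeastOrder {F : Type*} [Field F] {p q : ℕ}
    (G : Matrix (Fin p) (Fin q) (RatFunc F)) (n : ℕ) : Prop :=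
  (∃ (N : ℕ) (A : Matrix (Fin N) (Fin N) (Polynomial F))
      (B : Matrix (Fin N) (Fin q) (Polynomial F)) (C : Matrix (Fin p) (Fin N) (Polynomial F))
      (D : Matrix (Fin p) (Fin q) (Polynomial F)),
      A.det ≠ 0 ∧ A.det.natDegree = n ∧
      G = D.map (algebraMap (Polynomial F) (RatFunc F))
        + C.map (algebraMap (Polynomial F) (RatFunc F))
          * (A.map (algebraMap (Polynomial F) (RatFunc F)))⁻¹
          * B.map (algebraMap (Polynomial F) (RatFunc F))) ∧
  ∀ (N : ℕ) (A : Matrix (Fin N) (Fin N) (Polynomial F))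
      (B : Matrix (Fin N) (Fin q) (Polynomial F)) (C : Matrix (Fin p) (Fin N) (Polynomial F))
      (D : Matrix (Fin p) (Fin q) (Polynomial F)),
      A.det ≠ 0 →
      G = D.map (algebraMap (Polynomial F) (RatFunc F))
        + C.map (algebraMap (Polynomial F) (RatFunc F))
          * (A.map (algebraMap (Polynomial F) (RatFunc F)))⁻¹
          * B.map (algebraMap (Polynomial F) (RatFunc F)) →
      n ≤ A.det.natDegree

/-- `L(λ) = [[A(λ), B(λ)], [-C(λ), D(λ)]] ∈ F[λ]^{(n+(p+s))×(n+(m+s))}` is a strong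
linearization of the rational matrix `G ∈ F(λ)^{p×m}`:  it is a pencil, `n = ν(G)`,
`det A(λ) ≠ 0` if `n > 0`, and, with `Ĝ = D + C A⁻¹ B` its transfer function,
`U₁ diag(G, I_s) U₂ = Ĝ` for some unimodular `U₁, U₂` and
`B₁ diag(λ^{g(G)} G, I_s) B₂ = λ^{g(Ĝ)} Ĝ` for some biproper `B₁, B₂`. -/
def IsStrongLinearization {F : Type*} [Field F] {p m n s : ℕ}
    (G : Matrix (Fin p) (Fin m) (RatFunc F))
    (L : Matrix (Fin n ⊕ (Fin p ⊕ Fin s)) (Fin n ⊕ (Fin m ⊕ Fin s)) (Polynomial F)) : Prop :=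
  (∀ i j, (L i j).natDegree ≤ 1) ∧
  IsLeastOrder G n ∧
  (0 < n → L.toBlocks₁₁.det ≠ 0) ∧
  (let Ghat : Matrix (Fin p ⊕ Fin s) (Fin m ⊕ Fin s) (RatFunc F) :=
    L.toBlocks₂₂.map (algebraMap (Polynomial F) (RatFunc F))
      - L.toBlocks₂₁.map (algebraMap (Polynomial F) (RatFunc F))
        * (L.toBlocks₁₁.map (algebraMap (Polynomial F) (RatFunc F)))⁻¹
        * L.toBlocks₁₂.map (algebraMap (Polynomial F) (RatFunc F))
   (∃ (U₁ : Matrix (Fin p ⊕ Fin s) (Fin p ⊕ Fin s) (Polynomial F))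
      (U₂ : Matrix (Fin m ⊕ Fin s) (Fin m ⊕ Fin s) (Polynomial F)),
      Unimodular U₁ ∧ Unimodular U₂ ∧
      U₁.map (algebraMap (Polynomial F) (RatFunc F))
          * Matrix.fromBlocks G 0 0 (1 : Matrix (Fin s) (Fin s) (RatFunc F))
          * U₂.map (algebraMap (Polynomial F) (RatFunc F)) = Ghat) ∧
   (∃ (B₁ : Matrix (Fin p ⊕ Fin s) (Fin p ⊕ Fin s) (RatFunc F))
      (B₂ : Matrix (Fin m ⊕ Fin s) (Fin m ⊕ Fin s) (RatFunc F)),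
      BiproperMatrix B₁ ∧ BiproperMatrix B₂ ∧
      B₁ * Matrix.fromBlocks
          (Matrix.of fun i j => (RatFunc.X : RatFunc F) ^ gOrder G * G i j) 0 0
            (1 : Matrix (Fin s) (Fin s) (RatFunc F)) * B₂
        = Matrix.of fun i j => (RatFunc.X : RatFunc F) ^ gOrder Ghat * Ghat i j))


namespace SLAux

variable {F : Type*} [Field F]

/-- strictly proper or zero -/
def SP (r : RatFunc F) : Prop := r = 0 ∨ r.intDegree < 0

lemma SP_add {a b : RatFunc F} (ha : SP a) (hb : SP b) : SP (a + b) := by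
  rcases ha with rfl | ha
  · simpa using hb
  rcases hb with rfl | hb
  · rw [add_zero]; exact Or.inr ha
  rcases eq_or_ne (a + b) 0 with h | h
  · exact Or.inl h
  · have hb0 : b ≠ 0 := by rintro rfl; simp [RatFunc.intDegree_zero] at hb
    exact Or.inr (lt_of_le_of_lt (RatFunc.intDegree_add_le hb0 h) (max_lt ha hb))

lemma SP_neg {a : RatFunc F} (ha : SP a) : SP (-a) := by
  rcases ha with rfl | ha
  · simp [SP]
  · exact Or.inr (by rwa [RatFunc.intDegree_neg])

lemma SP_sub {a b : RatFunc F} (ha : SP a) (hb : SP b) : SP (a - b) := by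
  rw [sub_eq_add_neg]; exact SP_add ha (SP_neg hb)

lemma SP_constMul {c : F} (hc : c ≠ 0) {r : RatFunc F} (hr : SP r) :
    SP (algebraMap (Polynomial F) (RatFunc F) (Polynomial.C c) * r) := by
  rcases hr with rfl | hr
  · simp [SP]
  rcases eq_or_ne r 0 with rfl | hr0
  · simp [SP]
  have hc' : algebraMap (Polynomial F) (RatFunc F) (Polynomial.C c) ≠ 0 :=
    RatFunc.algebraMap_ne_zero (Polynomial.C_ne_zero.mpr hc)
  right
  rw [RatFunc.intDegree_mul hc' hr0, RatFunc.intDegree_polynomial, Polynomial.natDegree_C]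
  simpa using hr

lemma intDegree_algebraMap_div {p q : Polynomial F} (hp : p ≠ 0) (hq : q ≠ 0) :
    (algebraMap (Polynomial F) (RatFunc F) p / algebraMap (Polynomial F) (RatFunc F) q).intDegree
      = (p.natDegree : ℤ) - q.natDegree := by
  have hq' : algebraMap (Polynomial F) (RatFunc F) q ≠ 0 := RatFunc.algebraMap_ne_zero hq
  have hd : algebraMap (Polynomial F) (RatFunc F) p / algebraMap (Polynomial F) (RatFunc F) q ≠ 0 :=
    div_ne_zero (RatFunc.algebraMap_ne_zero hp) hq'
  have hmul := RatFunc.intDegree_mul hd hq'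
  rw [div_mul_cancel₀ _ hq', RatFunc.intDegree_polynomial, RatFunc.intDegree_polynomial] at hmul
  omega

lemma polyPart_zero : polyPart (0 : RatFunc F) = 0 := by
  unfold polyPart
  rw [RatFunc.num_zero, Polynomial.zero_divByMonic]

lemma sp_sub_polyPart (r : RatFunc F) :
    SP (r - algebraMap (Polynomial F) (RatFunc F) (polyPart r)) := by
  have hmd := Polynomial.modByMonic_add_div r.num r.denom
  have key : r - algebraMap (Polynomial F) (RatFunc F) (polyPart r)
      = algebraMap (Polynomial F) (RatFunc F) (r.num %ₘ r.denom)
        / algebraMap (Polynomial F) (RatFunc F) r.denom := by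
    have had : algebraMap (Polynomial F) (RatFunc F) r.denom ≠ 0 :=
      RatFunc.algebraMap_ne_zero (RatFunc.denom_ne_zero r)
    have h1 : r * algebraMap (Polynomial F) (RatFunc F) r.denom
        = algebraMap (Polynomial F) (RatFunc F) r.num :=
      ((div_eq_iff had).mp (RatFunc.num_div_denom r)).symm
    rw [eq_div_iff had, sub_mul, h1, ← _root_.map_mul, ← _root_.map_sub]
    congr 1
    unfold polyPart
    linear_combination -hmd
  rw [key]
  rcases eq_or_ne (r.num %ₘ r.denom) 0 with h0 | h0
  · left; rw [h0, map_zero, zero_div]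
  · right
    rw [intDegree_algebraMap_div h0 (RatFunc.denom_ne_zero r)]
    have := Polynomial.natDegree_lt_natDegree h0
      (Polynomial.degree_modByMonic_lt r.num (RatFunc.monic_denom r))
    omega

lemma polyPart_eq {r : RatFunc F} {q : Polynomial F}
    (h : SP (r - algebraMap (Polynomial F) (RatFunc F) q)) : polyPart r = q := by
  have h' := sp_sub_polyPart r
  have hd : SP (algebraMap (Polynomial F) (RatFunc F) (q - polyPart r)) := by
    have e : algebraMap (Polynomial F) (RatFunc F) (q - polyPart r)
        = (r - algebraMap (Polynomial F) (RatFunc F) (polyPart r))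
          - (r - algebraMap (Polynomial F) (RatFunc F) q) := by
      rw [_root_.map_sub]; ring
    rw [e]; exact SP_sub h' h
  by_contra hne
  have hne' : q - polyPart r ≠ 0 := sub_ne_zero.mpr fun e => hne e.symm
  rcases hd with h0 | hlt
  · exact (RatFunc.algebraMap_ne_zero hne') h0
  · rw [RatFunc.intDegree_polynomial] at hlt; omega

lemma polyPart_add (a b : RatFunc F) : polyPart (a + b) = polyPart a + polyPart b := by
  apply polyPart_eq
  have e : a + b - algebraMap (Polynomial F) (RatFunc F) (polyPart a + polyPart b)
      = (a - algebraMap (Polynomial F) (RatFunc F) (polyPart a))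
        + (b - algebraMap (Polynomial F) (RatFunc F) (polyPart b)) := by
    rw [_root_.map_add]; ring
  rw [e]; exact SP_add (sp_sub_polyPart a) (sp_sub_polyPart b)

lemma polyPart_constMul (c : F) (r : RatFunc F) :
    polyPart (algebraMap (Polynomial F) (RatFunc F) (Polynomial.C c) * r)
      = Polynomial.C c * polyPart r := by
  rcases eq_or_ne c 0 with rfl | hc
  · simp [polyPart_zero]
  apply polyPart_eq
  have e : algebraMap (Polynomial F) (RatFunc F) (Polynomial.C c) * r
        - algebraMap (Polynomial F) (RatFunc F) (Polynomial.C c * polyPart r)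
      = algebraMap (Polynomial F) (RatFunc F) (Polynomial.C c)
        * (r - algebraMap (Polynomial F) (RatFunc F) (polyPart r)) := by
    rw [_root_.map_mul]; ring
  rw [e]; exact SP_constMul hc (sp_sub_polyPart r)

lemma polyPart_sum {ι : Type*} (s : Finset ι) (g : ι → RatFunc F) :
    polyPart (∑ i ∈ s, g i) = ∑ i ∈ s, polyPart (g i) := by
  classical
  induction s using Finset.induction_on with
  | empty => simp [polyPart_zero]
  | insert _ _ hx ih => rw [Finset.sum_insert hx, Finset.sum_insert hx, polyPart_add, ih]

lemma polyPart_term (a b : F) (x : RatFunc F) :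
    polyPart (algebraMap (Polynomial F) (RatFunc F) (Polynomial.C a) * x
        * algebraMap (Polynomial F) (RatFunc F) (Polynomial.C b))
      = Polynomial.C a * polyPart x * Polynomial.C b := by
  rw [mul_comm (algebraMap (Polynomial F) (RatFunc F) (Polynomial.C a) * x),
    polyPart_constMul, polyPart_constMul]
  ring

end SLAux

namespace SLAux


variable {F : Type*} [Field F]

lemma polyPart_conj_entry {ι κ ι' κ' : Type*} [Fintype ι'] [Fintype κ']
    (P : Matrix ι ι' F) (M : Matrix ι' κ' (RatFunc F)) (Q : Matrix κ' κ F) (i : ι) (j : κ) :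
    polyPart (((P.map Polynomial.C).map (algebraMap (Polynomial F) (RatFunc F)) * M
        * (Q.map Polynomial.C).map (algebraMap (Polynomial F) (RatFunc F))) i j)
      = (P.map Polynomial.C * (Matrix.of fun a b => polyPart (M a b)) * Q.map Polynomial.C) i j := by
  simp only [Matrix.mul_apply, Matrix.map_apply, Matrix.of_apply, Finset.sum_mul,
    polyPart_sum, polyPart_term]

lemma pp_sup_le {ι κ ι' κ' : Type*} [Fintype ι'] [Fintype κ'] [Fintype ι] [Fintype κ]
    (P : Matrix ι ι' F) (M : Matrix ι' κ' (RatFunc F)) (Q : Matrix κ' κ F) (i : ι) (j : κ) :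
    (polyPart (((P.map Polynomial.C).map (algebraMap (Polynomial F) (RatFunc F)) * M
        * (Q.map Polynomial.C).map (algebraMap (Polynomial F) (RatFunc F))) i j)).natDegree
      ≤ Finset.univ.sup fun ij : ι' × κ' => (polyPart (M ij.1 ij.2)).natDegree := by
  rw [polyPart_conj_entry, Matrix.mul_apply]
  refine Polynomial.natDegree_sum_le_of_forall_le _ _ fun l _ => ?_
  refine le_trans Polynomial.natDegree_mul_le ?_
  have h2 : ((Q.map Polynomial.C) l j).natDegree = 0 := Polynomial.natDegree_C _
  rw [h2, add_zero, Matrix.mul_apply]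
  refine Polynomial.natDegree_sum_le_of_forall_le _ _ fun k _ => ?_
  refine le_trans Polynomial.natDegree_mul_le ?_
  have h1 : ((P.map Polynomial.C) i k).natDegree = 0 := Polynomial.natDegree_C _
  rw [h1, zero_add, Matrix.of_apply]
  exact Finset.le_sup (f := fun ij : ι' × κ' => (polyPart (M ij.1 ij.2)).natDegree)
    (Finset.mem_univ (k, l))

lemma pp_zero_conj {ι κ ι' κ' : Type*} [Fintype ι'] [Fintype κ']
    (P : Matrix ι ι' F) (M : Matrix ι' κ' (RatFunc F)) (Q : Matrix κ' κ F)
    (h : ∀ i j, polyPart (M i j) = 0) (i : ι) (j : κ) :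
    polyPart (((P.map Polynomial.C).map (algebraMap (Polynomial F) (RatFunc F)) * M
        * (Q.map Polynomial.C).map (algebraMap (Polynomial F) (RatFunc F))) i j) = 0 := by
  rw [polyPart_conj_entry]
  have hz : (Matrix.of fun a b => polyPart (M a b)) = (0 : Matrix ι' κ' (Polynomial F)) :=
    Matrix.ext h
  rw [hz, Matrix.mul_zero, Matrix.zero_mul]
  rfl

lemma gOrder_conj {ι κ : Type*} [Fintype ι] [Fintype κ] [DecidableEq ι] [DecidableEq κ]
    (P : Matrix ι ι F) (Q : Matrix κ κ F) (hP : IsUnit P.det) (hQ : IsUnit Q.det)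
    (M : Matrix ι κ (RatFunc F)) :
    gOrder ((P.map Polynomial.C).map (algebraMap (Polynomial F) (RatFunc F)) * M
        * (Q.map Polynomial.C).map (algebraMap (Polynomial F) (RatFunc F))) = gOrder M := by
  set alg := algebraMap (Polynomial F) (RatFunc F) with halg
  set M₂ := (P.map Polynomial.C).map alg * M * (Q.map Polynomial.C).map alg with hM₂
  have hPinv : ((P⁻¹.map Polynomial.C).map alg) * ((P.map Polynomial.C).map alg) = 1 := by
    rw [← Matrix.map_mul (f := alg), ← Matrix.map_mul (f := Polynomial.C),
      Matrix.nonsing_inv_mul _ hP]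
    simp
  have hQinv : ((Q.map Polynomial.C).map alg) * ((Q⁻¹.map Polynomial.C).map alg) = 1 := by
    rw [← Matrix.map_mul (f := alg), ← Matrix.map_mul (f := Polynomial.C),
      Matrix.mul_nonsing_inv _ hQ]
    simp
  have inv_eq : M = (P⁻¹.map Polynomial.C).map alg * M₂ * (Q⁻¹.map Polynomial.C).map alg := by
    rw [hM₂]
    simp only [Matrix.mul_assoc]
    rw [hQinv, Matrix.mul_one]
    rw [← Matrix.mul_assoc, hPinv, Matrix.one_mul]
  by_cases hz : ∀ i j, polyPart (M i j) = 0
  · have hz₂ : ∀ i j, polyPart (M₂ i j) = 0 := pp_zero_conj P M Q hz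
    rw [gOrder, gOrder, if_pos hz₂, if_pos hz]
  · have hz₂ : ¬ ∀ i j, polyPart (M₂ i j) = 0 := by
      intro hc
      exact hz fun i j => by rw [inv_eq]; exact pp_zero_conj P⁻¹ M₂ Q⁻¹ hc i j
    rw [gOrder, if_neg hz₂, gOrder, if_neg hz]
    congr 1
    norm_cast
    apply le_antisymm
    · exact Finset.sup_le fun ij _ => pp_sup_le P M Q ij.1 ij.2
    · refine Finset.sup_le fun ij _ => ?_
      have := pp_sup_le P⁻¹ M₂ Q⁻¹ ij.1 ij.2
      rw [← inv_eq] at this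
      exact this

end SLAux


namespace SLAux2
variable {F : Type*} [Field F]

lemma properRF_zero : ProperRF (0 : RatFunc F) := by
  unfold ProperRF; rw [RatFunc.intDegree_zero]

lemma ProperRF.addl {a b : RatFunc F} (ha : ProperRF a) (hb : ProperRF b) : ProperRF (a + b) := by
  unfold ProperRF at *
  rcases eq_or_ne b 0 with rfl | hb0
  · simpa using ha
  rcases eq_or_ne (a + b) 0 with h | h
  · rw [h, RatFunc.intDegree_zero]
  · exact le_trans (RatFunc.intDegree_add_le hb0 h) (max_le ha hb)

lemma ProperRF.mull {a b : RatFunc F} (ha : ProperRF a) (hb : ProperRF b) : ProperRF (a * b) := by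
  unfold ProperRF at *
  rcases eq_or_ne a 0 with rfl | ha0
  · rw [zero_mul, RatFunc.intDegree_zero]
  rcases eq_or_ne b 0 with rfl | hb0
  · rw [mul_zero, RatFunc.intDegree_zero]
  rw [RatFunc.intDegree_mul ha0 hb0]; omega

lemma properRF_sum {ι : Type*} (s : Finset ι) (g : ι → RatFunc F)
    (h : ∀ i ∈ s, ProperRF (g i)) : ProperRF (∑ i ∈ s, g i) := by
  classical
  induction s using Finset.induction_on with
  | empty => simpa using properRF_zero
  | insert _ _ hx ih =>
      rw [Finset.sum_insert hx]
      exact ProperRF.addl (h _ (Finset.mem_insert_self _ _))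
        (ih fun i hi => h i (Finset.mem_insert_of_mem hi))

lemma BiproperRF.mull {a b : RatFunc F} (ha : BiproperRF a) (hb : BiproperRF b) :
    BiproperRF (a * b) := by
  obtain ⟨ha0, ha1⟩ := ha
  obtain ⟨hb0, hb1⟩ := hb
  exact ⟨mul_ne_zero ha0 hb0, by rw [RatFunc.intDegree_mul ha0 hb0, ha1, hb1, add_zero]⟩

lemma BiproperMatrix.mull {ι : Type*} [Fintype ι] [DecidableEq ι]
    {M N : Matrix ι ι (RatFunc F)} (hM : BiproperMatrix M) (hN : BiproperMatrix N) :
    BiproperMatrix (M * N) := by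
  refine ⟨fun i j => ?_, ?_⟩
  · rw [Matrix.mul_apply]
    exact properRF_sum _ _ fun k _ => ProperRF.mull (hM.1 i k) (hN.1 k j)
  · rw [Matrix.det_mul]
    exact BiproperRF.mull hM.2 hN.2

lemma biproperMatrix_const {ι : Type*} [Fintype ι] [DecidableEq ι]
    (Q : Matrix ι ι F) (hQ : IsUnit Q.det) :
    BiproperMatrix ((Q.map Polynomial.C).map (algebraMap (Polynomial F) (RatFunc F))) := by
  have hdet : ((Q.map Polynomial.C).map (algebraMap (Polynomial F) (RatFunc F))).det
      = algebraMap (Polynomial F) (RatFunc F) (Polynomial.C Q.det) := by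
    rw [← RingHom.mapMatrix_apply, ← RingHom.mapMatrix_apply, ← RingHom.map_det, ← RingHom.map_det]
  refine ⟨fun i j => ?_, ?_⟩
  · show ProperRF (algebraMap (Polynomial F) (RatFunc F) (Polynomial.C (Q i j)))
    unfold ProperRF
    rw [RatFunc.intDegree_polynomial, Polynomial.natDegree_C]; exact le_refl 0
  · rw [hdet]
    refine ⟨RatFunc.algebraMap_ne_zero (Polynomial.C_ne_zero.mpr hQ.ne_zero), ?_⟩
    rw [RatFunc.intDegree_polynomial, Polynomial.natDegree_C]; rfl

end SLAux2


namespace SLAux3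

lemma hat_compute {K : Type*} [Field K] {ν ρ μ : Type*} [Fintype ν] [DecidableEq ν]
    [Fintype ρ] [Fintype μ]
    (A Q₁ Q₃ : Matrix ν ν K) (B : Matrix ν μ K) (C : Matrix ρ ν K) (D : Matrix ρ μ K)
    (Q₂ : Matrix ρ ρ K) (Q₄ : Matrix μ μ K) (W : Matrix ρ ν K) (Z : Matrix ν μ K)
    (hA : A.det ≠ 0) (h1 : Q₁.det ≠ 0) (h3 : Q₃.det ≠ 0) :
    ((W * A + Q₂ * C) * Z + (W * B + Q₂ * D) * Q₄)
      - (W * A + Q₂ * C) * Q₃ * (Q₁ * A * Q₃)⁻¹ * (Q₁ * A * Z + Q₁ * B * Q₄)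
    = Q₂ * (D - C * A⁻¹ * B) * Q₄ := by
  have hA' : IsUnit A.det := isUnit_iff_ne_zero.mpr hA
  have h1' : IsUnit Q₁.det := isUnit_iff_ne_zero.mpr h1
  have h3' : IsUnit Q₃.det := isUnit_iff_ne_zero.mpr h3
  have c3 : ∀ X : Matrix ν μ K, Q₃ * (Q₃⁻¹ * X) = X := fun X => by
    rw [← Matrix.mul_assoc, Matrix.mul_nonsing_inv _ h3', Matrix.one_mul]
  have c1 : ∀ X : Matrix ν μ K, Q₁⁻¹ * (Q₁ * X) = X := fun X => by
    rw [← Matrix.mul_assoc, Matrix.nonsing_inv_mul _ h1', Matrix.one_mul]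
  have cA : ∀ X : Matrix ν μ K, A * (A⁻¹ * X) = X := fun X => by
    rw [← Matrix.mul_assoc, Matrix.mul_nonsing_inv _ hA', Matrix.one_mul]
  have cA' : ∀ X : Matrix ν μ K, A⁻¹ * (A * X) = X := fun X => by
    rw [← Matrix.mul_assoc, Matrix.nonsing_inv_mul _ hA', Matrix.one_mul]
  rw [Matrix.mul_inv_rev, Matrix.mul_inv_rev]
  simp only [Matrix.mul_add, Matrix.add_mul, Matrix.mul_sub, Matrix.sub_mul, Matrix.mul_assoc,
    c3, c1, cA, cA']
  abel

end SLAux3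


set_option maxHeartbeats 2000000 in
set_option synthInstance.maxHeartbeats 400000 in
/-- If `𝓛₁(λ)` is a strong linearization of the rational matrix `G(λ)`,
then so is `𝓛₂(λ) = [[Q₁, 0], [W, Q₂]] 𝓛₁(λ) [[Q₃, Z], [0, Q₄]]` for any nonsingular
`Q₁, Q₂, Q₃, Q₄` and arbitrary `W, Z`. -/
theorem isStrongLinearization_of_strict_equivalence
    {F : Type*} [Field F] {p m n s : ℕ}
    (G : Matrix (Fin p) (Fin m) (RatFunc F))
    (L₁ : Matrix (Fin n ⊕ (Fin p ⊕ Fin s)) (Fin n ⊕ (Fin m ⊕ Fin s)) (Polynomial F))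
    (h : IsStrongLinearization G L₁)
    (Q₁ Q₃ : Matrix (Fin n) (Fin n) F)
    (Q₂ : Matrix (Fin p ⊕ Fin s) (Fin p ⊕ Fin s) F)
    (Q₄ : Matrix (Fin m ⊕ Fin s) (Fin m ⊕ Fin s) F)
    (hQ₁ : IsUnit Q₁.det) (hQ₂ : IsUnit Q₂.det) (hQ₃ : IsUnit Q₃.det) (hQ₄ : IsUnit Q₄.det)
    (W : Matrix (Fin p ⊕ Fin s) (Fin n) F)
    (Z : Matrix (Fin n) (Fin m ⊕ Fin s) F) :
    IsStrongLinearization G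
      ((Matrix.fromBlocks Q₁ 0 W Q₂).map Polynomial.C * L₁ *
        (Matrix.fromBlocks Q₃ Z 0 Q₄).map Polynomial.C) := by
  classical
  obtain ⟨hdeg, hleast, hdetn, hrest⟩ := h
  obtain ⟨hU', hB'⟩ := hrest
  obtain ⟨U₁, U₂, hU₁uni, hU₂uni, hUeq⟩ := hU'
  obtain ⟨B₁, B₂, hB₁bi, hB₂bi, hBeq⟩ := hB'
  have hAdet : L₁.toBlocks₁₁.det ≠ 0 := by
    rcases Nat.eq_zero_or_pos n with h0 | h0
    · subst h0
      rw [Matrix.det_isEmpty]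
      exact one_ne_zero
    · exact hdetn h0
  have detC : ∀ {ι : Type} [Fintype ι] [DecidableEq ι] (R : Matrix ι ι F),
      (R.map Polynomial.C).det = Polynomial.C R.det := by
    intro ι _ _ R
    rw [← RingHom.mapMatrix_apply]
    exact (RingHom.map_det _ _).symm
  have detA : ∀ {ι : Type} [Fintype ι] [DecidableEq ι] (R : Matrix ι ι (Polynomial F)),
      (R.map (algebraMap (Polynomial F) (RatFunc F))).det
        = (algebraMap (Polynomial F) (RatFunc F)) R.det := by
    intro ι _ _ R
    rw [← RingHom.mapMatrix_apply]
    exact (RingHom.map_det _ _).symm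
  have hL₂ : (Matrix.fromBlocks Q₁ 0 W Q₂).map Polynomial.C * L₁ *
        (Matrix.fromBlocks Q₃ Z 0 Q₄).map Polynomial.C
      = Matrix.fromBlocks
          (Q₁.map Polynomial.C * L₁.toBlocks₁₁ * Q₃.map Polynomial.C)
          (Q₁.map Polynomial.C * L₁.toBlocks₁₁ * Z.map Polynomial.C
            + Q₁.map Polynomial.C * L₁.toBlocks₁₂ * Q₄.map Polynomial.C)
          ((W.map Polynomial.C * L₁.toBlocks₁₁ + Q₂.map Polynomial.C * L₁.toBlocks₂₁)
            * Q₃.map Polynomial.C)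
          ((W.map Polynomial.C * L₁.toBlocks₁₁ + Q₂.map Polynomial.C * L₁.toBlocks₂₁)
              * Z.map Polynomial.C
            + (W.map Polynomial.C * L₁.toBlocks₁₂ + Q₂.map Polynomial.C * L₁.toBlocks₂₂)
              * Q₄.map Polynomial.C) := by
    conv_lhs => rw [← Matrix.fromBlocks_toBlocks L₁]
    rw [Matrix.fromBlocks_map, Matrix.fromBlocks_map, Matrix.fromBlocks_multiply,
      Matrix.fromBlocks_multiply]
    simp only [Matrix.map_zero _ (map_zero Polynomial.C), Matrix.zero_mul, Matrix.mul_zero,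
      add_zero, zero_add]
  have h11 : ((Matrix.fromBlocks Q₁ 0 W Q₂).map Polynomial.C * L₁ *
          (Matrix.fromBlocks Q₃ Z 0 Q₄).map Polynomial.C).toBlocks₁₁
      = Q₁.map Polynomial.C * L₁.toBlocks₁₁ * Q₃.map Polynomial.C := by
    rw [hL₂]; exact Matrix.toBlocks_fromBlocks₁₁ _ _ _ _
  have h12 : ((Matrix.fromBlocks Q₁ 0 W Q₂).map Polynomial.C * L₁ *
          (Matrix.fromBlocks Q₃ Z 0 Q₄).map Polynomial.C).toBlocks₁₂
      = Q₁.map Polynomial.C * L₁.toBlocks₁₁ * Z.map Polynomial.C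
          + Q₁.map Polynomial.C * L₁.toBlocks₁₂ * Q₄.map Polynomial.C := by
    rw [hL₂]; exact Matrix.toBlocks_fromBlocks₁₂ _ _ _ _
  have h21 : ((Matrix.fromBlocks Q₁ 0 W Q₂).map Polynomial.C * L₁ *
          (Matrix.fromBlocks Q₃ Z 0 Q₄).map Polynomial.C).toBlocks₂₁
      = (W.map Polynomial.C * L₁.toBlocks₁₁ + Q₂.map Polynomial.C * L₁.toBlocks₂₁)
          * Q₃.map Polynomial.C := by
    rw [hL₂]; exact Matrix.toBlocks_fromBlocks₂₁ _ _ _ _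
  have h22 : ((Matrix.fromBlocks Q₁ 0 W Q₂).map Polynomial.C * L₁ *
          (Matrix.fromBlocks Q₃ Z 0 Q₄).map Polynomial.C).toBlocks₂₂
      = (W.map Polynomial.C * L₁.toBlocks₁₁ + Q₂.map Polynomial.C * L₁.toBlocks₂₁)
            * Z.map Polynomial.C
        + (W.map Polynomial.C * L₁.toBlocks₁₂ + Q₂.map Polynomial.C * L₁.toBlocks₂₂)
            * Q₄.map Polynomial.C := by
    rw [hL₂]; exact Matrix.toBlocks_fromBlocks₂₂ _ _ _ _
  have key : ((Matrix.fromBlocks Q₁ 0 W Q₂).map Polynomial.C * L₁ *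
          (Matrix.fromBlocks Q₃ Z 0 Q₄).map Polynomial.C).toBlocks₂₂.map (algebraMap (Polynomial F) (RatFunc F))
        - ((Matrix.fromBlocks Q₁ 0 W Q₂).map Polynomial.C * L₁ *
          (Matrix.fromBlocks Q₃ Z 0 Q₄).map Polynomial.C).toBlocks₂₁.map (algebraMap (Polynomial F) (RatFunc F))
          * (((Matrix.fromBlocks Q₁ 0 W Q₂).map Polynomial.C * L₁ *
          (Matrix.fromBlocks Q₃ Z 0 Q₄).map Polynomial.C).toBlocks₁₁.map (algebraMap (Polynomial F) (RatFunc F)))⁻¹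
          * ((Matrix.fromBlocks Q₁ 0 W Q₂).map Polynomial.C * L₁ *
          (Matrix.fromBlocks Q₃ Z 0 Q₄).map Polynomial.C).toBlocks₁₂.map (algebraMap (Polynomial F) (RatFunc F))
      = (Q₂.map Polynomial.C).map (algebraMap (Polynomial F) (RatFunc F))
          * (L₁.toBlocks₂₂.map (algebraMap (Polynomial F) (RatFunc F))
                - L₁.toBlocks₂₁.map (algebraMap (Polynomial F) (RatFunc F))
                  * (L₁.toBlocks₁₁.map (algebraMap (Polynomial F) (RatFunc F)))⁻¹
                  * L₁.toBlocks₁₂.map (algebraMap (Polynomial F) (RatFunc F)))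
          * (Q₄.map Polynomial.C).map (algebraMap (Polynomial F) (RatFunc F)) := by
    rw [h11, h12, h21, h22]
    simp only [Matrix.map_mul,
      Matrix.map_add _ (map_add (algebraMap (Polynomial F) (RatFunc F)))]
    refine SLAux3.hat_compute
      (L₁.toBlocks₁₁.map (algebraMap (Polynomial F) (RatFunc F)))
      ((Q₁.map Polynomial.C).map (algebraMap (Polynomial F) (RatFunc F)))
      ((Q₃.map Polynomial.C).map (algebraMap (Polynomial F) (RatFunc F)))
      (L₁.toBlocks₁₂.map (algebraMap (Polynomial F) (RatFunc F)))
      (L₁.toBlocks₂₁.map (algebraMap (Polynomial F) (RatFunc F)))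
      (L₁.toBlocks₂₂.map (algebraMap (Polynomial F) (RatFunc F)))
      ((Q₂.map Polynomial.C).map (algebraMap (Polynomial F) (RatFunc F)))
      ((Q₄.map Polynomial.C).map (algebraMap (Polynomial F) (RatFunc F)))
      ((W.map Polynomial.C).map (algebraMap (Polynomial F) (RatFunc F)))
      ((Z.map Polynomial.C).map (algebraMap (Polynomial F) (RatFunc F)))
      ?_ ?_ ?_
    · rw [detA]
      exact RatFunc.algebraMap_ne_zero hAdet
    · rw [detA, detC]
      exact RatFunc.algebraMap_ne_zero (Polynomial.C_ne_zero.mpr hQ₁.ne_zero)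
    · rw [detA, detC]
      exact RatFunc.algebraMap_ne_zero (Polynomial.C_ne_zero.mpr hQ₃.ne_zero)
  refine ⟨?_, hleast, ?_, ?_⟩
  · intro i j
    rw [Matrix.mul_apply]
    refine Polynomial.natDegree_sum_le_of_forall_le _ _ fun l _ => ?_
    refine le_trans Polynomial.natDegree_mul_le ?_
    rw [Matrix.map_apply, Polynomial.natDegree_C, add_zero, Matrix.mul_apply]
    refine Polynomial.natDegree_sum_le_of_forall_le _ _ fun k _ => ?_
    refine le_trans Polynomial.natDegree_mul_le ?_
    rw [Matrix.map_apply, Polynomial.natDegree_C, zero_add]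
    exact hdeg k l
  · intro hn
    rw [h11, Matrix.det_mul, Matrix.det_mul, detC, detC]
    exact mul_ne_zero
      (mul_ne_zero (Polynomial.C_ne_zero.mpr hQ₁.ne_zero) (hdetn hn))
      (Polynomial.C_ne_zero.mpr hQ₃.ne_zero)
  · constructor
    · refine ⟨Q₂.map Polynomial.C * U₁, U₂ * Q₄.map Polynomial.C, ?_, ?_, ?_⟩
      · obtain ⟨c, hc, hcd⟩ := hU₁uni
        exact ⟨Q₂.det * c, mul_ne_zero hQ₂.ne_zero hc,
          by rw [Matrix.det_mul, hcd, detC, ← Polynomial.C_mul]⟩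
      · obtain ⟨c, hc, hcd⟩ := hU₂uni
        exact ⟨c * Q₄.det, mul_ne_zero hc hQ₄.ne_zero,
          by rw [Matrix.det_mul, hcd, detC, ← Polynomial.C_mul]⟩
      · rw [key, Matrix.map_mul, Matrix.map_mul, ← hUeq]
        simp only [Matrix.mul_assoc]
    · refine ⟨(Q₂.map Polynomial.C).map (algebraMap (Polynomial F) (RatFunc F)) * B₁,
        B₂ * (Q₄.map Polynomial.C).map (algebraMap (Polynomial F) (RatFunc F)), ?_, ?_, ?_⟩
      · exact SLAux2.BiproperMatrix.mull (SLAux2.biproperMatrix_const Q₂ hQ₂) hB₁bi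
      · exact SLAux2.BiproperMatrix.mull hB₂bi (SLAux2.biproperMatrix_const Q₄ hQ₄)
      · have hg : gOrder
            ((Q₂.map Polynomial.C).map (algebraMap (Polynomial F) (RatFunc F))
              * (L₁.toBlocks₂₂.map (algebraMap (Polynomial F) (RatFunc F))
                - L₁.toBlocks₂₁.map (algebraMap (Polynomial F) (RatFunc F))
                  * (L₁.toBlocks₁₁.map (algebraMap (Polynomial F) (RatFunc F)))⁻¹
                  * L₁.toBlocks₁₂.map (algebraMap (Polynomial F) (RatFunc F)))
              * (Q₄.map Polynomial.C).map (algebraMap (Polynomial F) (RatFunc F)))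
            = gOrder (L₁.toBlocks₂₂.map (algebraMap (Polynomial F) (RatFunc F))
                - L₁.toBlocks₂₁.map (algebraMap (Polynomial F) (RatFunc F))
                  * (L₁.toBlocks₁₁.map (algebraMap (Polynomial F) (RatFunc F)))⁻¹
                  * L₁.toBlocks₁₂.map (algebraMap (Polynomial F) (RatFunc F))) :=
          SLAux.gOrder_conj Q₂ Q₄ hQ₂ hQ₄ _
        have hsm : ∀ {ι' κ' : Type} (c : RatFunc F) (M : Matrix ι' κ' (RatFunc F)),
            (Matrix.of fun i j => c * M i j) = (c • M : Matrix ι' κ' (RatFunc F)) :=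
          fun c M => rfl
        have lhs_eq : (Q₂.map Polynomial.C).map (algebraMap (Polynomial F) (RatFunc F)) * B₁
              * (Matrix.fromBlocks
                  (Matrix.of fun i j => (RatFunc.X : RatFunc F) ^ gOrder G * G i j) 0 0 1 :
                    Matrix (Fin p ⊕ Fin s) (Fin m ⊕ Fin s) (RatFunc F))
              * (B₂ * (Q₄.map Polynomial.C).map (algebraMap (Polynomial F) (RatFunc F)))
            = (Q₂.map Polynomial.C).map (algebraMap (Polynomial F) (RatFunc F))
              * (B₁ * (Matrix.fromBlocks
                  (Matrix.of fun i j => (RatFunc.X : RatFunc F) ^ gOrder G * G i j) 0 0 1 :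
                    Matrix (Fin p ⊕ Fin s) (Fin m ⊕ Fin s) (RatFunc F)) * B₂)
              * (Q₄.map Polynomial.C).map (algebraMap (Polynomial F) (RatFunc F)) := by
          simp only [Matrix.mul_assoc]
        rw [lhs_eq, hBeq, key, hg, hsm, hsm, Matrix.mul_smul, Matrix.smul_mul]
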